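/- For positive integers x, y and nonnegative integers a, b, we have (x+y+a)!·b! + (x+y+b)!·a! > (x+a)!·(y+b)! + (x+b)!·(y+a)!. -/
import Mathlib

lemma fact_key (s t k : ℕ) (h : t ≤ s) :
    s.factorial * (t + k).factorial ≤ (s + k).factorial * t.factorial := by
  induction k with
  | zero => simp
  | succ k ih =>
    calc s.factorial * (t + (k+1)).factorial
        = (t + k + 1) * (s.factorial * (t + k).factorial) := by
          rw [show t + (k+1) = (t+k)+1 from rfl, Nat.factorial_succ]; ring
      _ ≤ (s + k + 1) * ((s + k).factorial * t.factorial) :=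
          Nat.mul_le_mul (by omega) ih
      _ = (s + (k+1)).factorial * t.factorial := by
          rw [show s + (k+1) = (s+k)+1 from rfl, Nat.factorial_succ]; ring

lemma fact_strict (s t k : ℕ) (h : t < s) (hk : 0 < k) :
    s.factorial * (t + k).factorial < (s + k).factorial * t.factorial := by
  obtain ⟨k', rfl⟩ : ∃ k', k = k' + 1 := ⟨k - 1, by omega⟩
  have hpos : 0 < (s + k').factorial * t.factorial :=
    Nat.mul_pos (Nat.factorial_pos _) (Nat.factorial_pos _)
  calc s.factorial * (t + (k'+1)).factorial
      = (t + k' + 1) * (s.factorial * (t + k').factorial) := by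
        rw [show t + (k'+1) = (t+k')+1 from rfl, Nat.factorial_succ]; ring
    _ ≤ (t + k' + 1) * ((s + k').factorial * t.factorial) :=
        Nat.mul_le_mul_left _ (fact_key s t k' h.le)
    _ < (s + k' + 1) * ((s + k').factorial * t.factorial) :=
        Nat.mul_lt_mul_of_pos_right (by omega) hpos
    _ = (s + (k'+1)).factorial * t.factorial := by
        rw [show s + (k'+1) = (s+k')+1 from rfl, Nat.factorial_succ]; ring

lemma cross (s t d k : ℕ) (hts : t ≤ s) (hd : 1 ≤ d) (hk : 1 ≤ k) :
    (s+d).factorial * (t+k).factorial + (s+k).factorial * (t+d).factorial <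
      (s+d+k).factorial * t.factorial + s.factorial * (t+d+k).factorial := by
  set A := (s+d+k).factorial * t.factorial with hA
  set E := s.factorial * (t+d+k).factorial with hE
  set B := (s+d).factorial * (t+k).factorial with hB
  set C := (s+k).factorial * (t+d).factorial with hC
  have hab : B < A := fact_strict (s+d) t k (by omega) hk
  have hac : C < A := by
    have := fact_strict (s+k) t d (by omega) hd
    rw [show s+k+d = s+d+k from by omega] at this
    exact this
  have hbc : B * C ≤ A * E := by
    have h1 : (s+k).factorial * (s+d).factorial ≤ (s+d+k).factorial * s.factorial := by
      have := fact_key (s+k) s d (by omega)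
      rw [show s + k + d = s+d+k from by omega] at this
      exact this
    have h2 : (t+k).factorial * (t+d).factorial ≤ (t+d+k).factorial * t.factorial := by
      have := fact_key (t+k) t d (by omega)
      rw [show t + k + d = t+d+k from by omega] at this
      exact this
    calc B * C = ((s+k).factorial * (s+d).factorial) * ((t+k).factorial * (t+d).factorial) := by
          rw [hB, hC]; ring
      _ ≤ ((s+d+k).factorial * s.factorial) * ((t+d+k).factorial * t.factorial) :=
          Nat.mul_le_mul h1 h2
      _ = A * E := by rw [hA, hE]; ring
  have hApos : 0 < A := Nat.mul_pos (Nat.factorial_pos _) (Nat.factorial_pos _)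
  have key : A * (B + C) < A * (A + E) := by nlinarith [hab, hac, hbc]
  exact lt_of_mul_lt_mul_left key (Nat.zero_le A)

lemma claimC (p w i j t0 : ℕ) (hi : 1 ≤ i) (hp : w + 2*i + j + t0 ≤ p)
    (A B C D E F G H : ℕ)
    (hA : A = p+i+j) (hB : B = w+i+t0) (hC : C = p+i) (hD : D = w+i+j+t0)
    (hE : E = p+2*i+j+t0) (hF : F = w) (hG : G = p) (hH : H = w+2*i+j+t0) :
    A.factorial * B.factorial + C.factorial * D.factorial <
      E.factorial * F.factorial + G.factorial * H.factorial := by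
  subst hA hB hC hD hE hF hG hH
  have hc := cross G (F+t0) (i+j) i (by omega) (by omega) (by omega)
  rw [show G+(i+j) = G+i+j from by omega,
      show F+t0+i = F+i+t0 from by omega,
      show F+t0+(i+j) = F+i+j+t0 from by omega,
      show G+i+j+i = G+2*i+j from by omega,
      show F+i+j+t0+i = F+2*i+j+t0 from by omega] at hc
  have hk := fact_key (G+2*i+j) F t0 (by omega)
  linarith

lemma helper (x y a b : ℕ) (hx : 0 < x) (hy : 0 < y) (hab : a ≤ b) :
    (x + y + a).factorial * b.factorial + (x + y + b).factorial * a.factorial >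
      (x + a).factorial * (y + b).factorial + (x + b).factorial * (y + a).factorial := by
  rcases le_or_gt b (y + a) with hb | hb
  · -- Case A: b ≤ y + a
    have h1 : (y+b).factorial * (x+a).factorial < (x+y+b).factorial * a.factorial := by
      have := fact_strict (y+b) a x (by omega) hx
      rw [show a+x = x+a from by omega, show y+b+x = x+y+b from by omega] at this
      exact this
    have h2 : (y+a).factorial * (x+b).factorial ≤ (x+y+a).factorial * b.factorial := by
      have := fact_key (y+a) b x hb
      rw [show b+x = x+b from by omega, show y+a+x = x+y+a from by omega] at this
      exact this
    have e1 : (y+b).factorial * (x+a).factorial = (x+a).factorial * (y+b).factorial :=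
      mul_comm _ _
    have e2 : (y+a).factorial * (x+b).factorial = (x+b).factorial * (y+a).factorial :=
      mul_comm _ _
    linarith
  · rcases le_or_gt b (x + a) with hb2 | hb2
    · -- Case B1: y + a < b ≤ x + a
      have h1 : (x+b).factorial * (y+a).factorial < (x+y+b).factorial * a.factorial := by
        have := fact_strict (x+b) a y (by omega) hy
        rw [show a+y = y+a from by omega, show x+b+y = x+y+b from by omega] at this
        exact this
      have h2 : (x+a).factorial * (y+b).factorial ≤ (x+y+a).factorial * b.factorial := by
        have := fact_key (x+a) b y hb2
        rw [show b+y = y+b from by omega, show x+a+y = x+y+a from by omega] at this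
        exact this
      linarith
    · -- Case B2: b > x + a and b > y + a : hard case
      rcases le_total x y with hxy | hxy
      · rcases le_total (x+y+a) b with hbig | hbig
        · have H := claimC b a x (y-x) 0 (by omega) (by omega)
            (y+b) (x+a) (x+b) (y+a) (x+y+b) a b (x+y+a)
            (by omega) (by omega) (by omega) (by omega) (by omega) (by omega) (by omega) (by omega)
          have e1 : (y+b).factorial * (x+a).factorial = (x+a).factorial * (y+b).factorial :=
            mul_comm _ _
          have e2 : b.factorial * (x+y+a).factorial = (x+y+a).factorial * b.factorial :=
            mul_comm _ _
          linarith
        · have H := claimC (x+y+a) a (b-(y+a)) (y-x) (x+y+a-b) (by omega) (by omega)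
            (y+b) (x+a) (x+b) (y+a) (x+y+b) a (x+y+a) b
            (by omega) (by omega) (by omega) (by omega) (by omega) (by omega) (by omega) (by omega)
          have e1 : (y+b).factorial * (x+a).factorial = (x+a).factorial * (y+b).factorial :=
            mul_comm _ _
          linarith
      · rcases le_total (x+y+a) b with hbig | hbig
        · have H := claimC b a y (x-y) 0 (by omega) (by omega)
            (x+b) (y+a) (y+b) (x+a) (x+y+b) a b (x+y+a)
            (by omega) (by omega) (by omega) (by omega) (by omega) (by omega) (by omega) (by omega)
          have e1 : (y+b).factorial * (x+a).factorial = (x+a).factorial * (y+b).factorial :=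
            mul_comm _ _
          have e2 : b.factorial * (x+y+a).factorial = (x+y+a).factorial * b.factorial :=
            mul_comm _ _
          linarith
        · have H := claimC (x+y+a) a (b-(x+a)) (x-y) (x+y+a-b) (by omega) (by omega)
            (x+b) (y+a) (y+b) (x+a) (x+y+b) a (x+y+a) b
            (by omega) (by omega) (by omega) (by omega) (by omega) (by omega) (by omega) (by omega)
          have e1 : (y+b).factorial * (x+a).factorial = (x+a).factorial * (y+b).factorial :=
            mul_comm _ _
          linarith

theorem factorial_sum_inequality (x y a b : ℕ) (hx : 0 < x) (hy : 0 < y) :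
    (x + y + a).factorial * b.factorial + (x + y + b).factorial * a.factorial >
      (x + a).factorial * (y + b).factorial + (x + b).factorial * (y + a).factorial := by
  rcases le_total a b with h | h
  · exact helper x y a b hx hy h
  · have H := helper x y b a hx hy h
    have e1 : (x+b).factorial * (y+a).factorial = (y+a).factorial * (x+b).factorial := mul_comm _ _
    have e2 : (x+a).factorial * (y+b).factorial = (y+b).factorial * (x+a).factorial := mul_comm _ _
    linarith
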